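/- arXiv:2201.05722 — 3 statements merged into one kernel-verified Lean document; each statement's English description precedes it below -/
import Mathlib

section
/- Let 0 < S_m < S_{k+1} < S_* ≤ 1. Then S_* * ln(S_{k+1}/S_m) - (S_{k+1} - S_m) ≤ (S_* - S_m)^2 / S_m. -/
theorem level_line_lower_estimate (Sm Sk Sstar : ℝ)
    (h0 : 0 < Sm) (h1 : Sm < Sk) (h2 : Sk < Sstar) (h3 : Sstar ≤ 1) :
    Sstar * Real.log (Sk / Sm) - (Sk - Sm) ≤ (Sstar - Sm) ^ 2 / Sm := by
  have hpos : (0:ℝ) < Sk / Sm := div_pos (h0.trans h1) h0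
  have hlog := Real.log_le_sub_one_of_pos hpos
  have hd : Sk / Sm - 1 = (Sk - Sm) / Sm := by field_simp
  rw [hd] at hlog
  have hSstar : 0 < Sstar := h0.trans (h1.trans h2)
  have h4 : Sstar * Real.log (Sk / Sm) ≤ Sstar * ((Sk - Sm) / Sm) :=
    mul_le_mul_of_nonneg_left hlog hSstar.le
  have key : Sstar * ((Sk - Sm) / Sm) - (Sk - Sm) ≤ (Sstar - Sm) ^ 2 / Sm := by
    rw [le_div_iff₀ h0]
    have h5 : (Sstar * ((Sk - Sm) / Sm) - (Sk - Sm)) * Sm = (Sstar - Sm) * (Sk - Sm) := by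
      field_simp
    rw [h5]
    nlinarith
  linarith
end

section
/- Suppose f : (0,1] → (0,∞) satisfies ε₀ ≤ f'(I) for all I and f(I) ≤ R₀ⁿᵃᵗ for I ∈ (0,1], with ε₀ > 0. Then for any I_*, I ∈ (0,1], (ε₀/(2R₀ⁿᵃᵗ))(I - I_*)² ≤ ∫_{I_*}^{I} (f(i) - f(I_*))/f(i) di. -/
lemma integ_sub_aux (a b c : ℝ) : (∫ x in a..b, (x - c)) = ((b - c) ^ 2 - (a - c) ^ 2) / 2 := by
  rw [intervalIntegral.integral_comp_sub_right (fun x => x) c, integral_id]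

theorem integral_lower_bound (f f' : ℝ → ℝ) (eps0 Rnat : ℝ)
    (heps : 0 < eps0)
    (hf : ∀ x ∈ Set.Ioc (0 : ℝ) 1,
      0 < f x ∧ f x ≤ Rnat ∧ HasDerivAt f (f' x) x ∧ eps0 ≤ f' x) :
    ∀ Istar ∈ Set.Ioc (0 : ℝ) 1, ∀ I ∈ Set.Ioc (0 : ℝ) 1,
      eps0 / (2 * Rnat) * (I - Istar) ^ 2 ≤
        ∫ i in Istar..I, (f i - f Istar) / f i := by
  intro Istar hIs I hI
  set D := Set.Ioc (0 : ℝ) 1 with hD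
  have hconv : Convex ℝ D := convex_Ioc _ _
  have hR : 0 < Rnat := lt_of_lt_of_le (hf Istar hIs).1 (hf Istar hIs).2.1
  have hcont : ContinuousOn f D := fun x hx => ((hf x hx).2.2.1.continuousAt).continuousWithinAt
  have hderiv : ∀ x ∈ interior D, eps0 ≤ deriv f x := by
    intro x hx
    rw [hD, interior_Ioc] at hx
    have hx' : x ∈ D := Set.Ioo_subset_Ioc_self hx
    rw [(hf x hx').2.2.1.deriv]
    exact (hf x hx').2.2.2
  have hdiff : DifferentiableOn ℝ f (interior D) := by
    intro x hx
    rw [hD, interior_Ioc] at hx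
    exact ((hf x (Set.Ioo_subset_Ioc_self hx)).2.2.1.differentiableAt).differentiableWithinAt
  have key : ∀ a ∈ D, ∀ b ∈ D, a ≤ b → eps0 * (b - a) ≤ f b - f a :=
    fun a ha b hb hab => hconv.mul_sub_le_image_sub_of_le_deriv hcont hdiff hderiv a ha b hb hab
  have hsub : Set.uIcc Istar I ⊆ D := Set.ordConnected_Ioc.uIcc_subset hIs hI
  have hgcont : ContinuousOn (fun i => (f i - f Istar) / f i) (Set.uIcc Istar I) :=
    ((hcont.mono hsub).sub continuousOn_const).div (hcont.mono hsub)
      (fun i hi => ne_of_gt (hf i (hsub hi)).1)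
  have hgint : IntervalIntegrable (fun i => (f i - f Istar) / f i) MeasureTheory.volume Istar I :=
    hgcont.intervalIntegrable
  have hhint : ∀ a b : ℝ, IntervalIntegrable (fun i => eps0 / Rnat * (i - Istar))
      MeasureTheory.volume a b :=
    fun a b => (Continuous.intervalIntegrable (by continuity) a b)
  rcases le_total Istar I with hord | hord
  · have hmono : ∀ i ∈ Set.Icc Istar I,
        eps0 / Rnat * (i - Istar) ≤ (f i - f Istar) / f i := by
      intro i hi
      have hiD : i ∈ D := hsub (by rw [Set.uIcc_of_le hord]; exact hi)
      have h1 : eps0 * (i - Istar) ≤ f i - f Istar := key Istar hIs i hiD hi.1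
      have hnn : 0 ≤ f i - f Istar :=
        le_trans (mul_nonneg heps.le (sub_nonneg.mpr hi.1)) h1
      have h2 : (f i - f Istar) / Rnat ≤ (f i - f Istar) / f i :=
        div_le_div_of_nonneg_left hnn (hf i hiD).1 (hf i hiD).2.1
      calc eps0 / Rnat * (i - Istar) = eps0 * (i - Istar) / Rnat := by ring
        _ ≤ (f i - f Istar) / Rnat := (div_le_div_iff_of_pos_right hR).mpr h1
        _ ≤ (f i - f Istar) / f i := h2
    have := intervalIntegral.integral_mono_on hord (hhint Istar I) hgint hmono
    calc eps0 / (2 * Rnat) * (I - Istar) ^ 2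
        = ∫ i in Istar..I, eps0 / Rnat * (i - Istar) := by
          rw [intervalIntegral.integral_const_mul, integ_sub_aux]
          rw [sub_self]
          field_simp
          ring_nf
      _ ≤ _ := this
  · have hmono : ∀ i ∈ Set.Icc I Istar,
        (f i - f Istar) / f i ≤ eps0 / Rnat * (i - Istar) := by
      intro i hi
      have hiD : i ∈ D := hsub (by rw [Set.uIcc_of_ge hord]; exact hi)
      have h1 : eps0 * (Istar - i) ≤ f Istar - f i := key i hiD Istar hIs hi.2
      have h1' : f i - f Istar ≤ eps0 * (i - Istar) := by linarith
      have hnp : f i - f Istar ≤ 0 := by nlinarith [sub_nonneg.mpr hi.2]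
      have hfi := (hf i hiD).1
      have hfiR := (hf i hiD).2.1
      have h2 : (f i - f Istar) / f i ≤ (f i - f Istar) / Rnat := by
        rw [div_le_div_iff₀ hfi hR]
        nlinarith
      calc (f i - f Istar) / f i ≤ (f i - f Istar) / Rnat := h2
        _ ≤ eps0 / Rnat * (i - Istar) := by
            rw [div_mul_eq_mul_div, div_le_div_iff₀ hR hR]
            nlinarith [h1']
    have hle := intervalIntegral.integral_mono_on hord hgint.symm (hhint I Istar) hmono
    have hswap : (∫ i in Istar..I, (f i - f Istar) / f i)
        = -∫ i in I..Istar, (f i - f Istar) / f i :=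
      (intervalIntegral.integral_symm I Istar)
    rw [hswap]
    have hval : (∫ i in I..Istar, eps0 / Rnat * (i - Istar))
        = -(eps0 / (2 * Rnat) * (I - Istar) ^ 2) := by
      rw [intervalIntegral.integral_const_mul, integ_sub_aux]
      rw [sub_self]
      field_simp
      ring_nf
    linarith [hle, hval ▸ hle]
end

section
/- Let R₁, R₂ : [0,1] → ℝ be decreasing with values in [R₀ⁱⁿᵗ, R₀ⁿᵃᵗ], |R₁(x) - R₂(y)| ≤ q₀(|x-y| + δ) for all x,y (with δ ≥ 0 a fixed state distance), and let I_*¹, I_*² ∈ (0,ρ) satisfy 1/R_j(I_*ʲ) = 1 - I_*ʲ/ρ for j = 1,2 with 0 < ρ < 1. If additionally R₂(I) ≤ R₁(I) for all I and R₂( I_*¹) ≥ R₁(I_*¹) - q₀·Δ for some Δ ≥ 0, then 0 ≤ I_*¹ - I_*² = ρ(S_*² - S_*¹) ≤ (ρ q₀ Δ)/(R₂(I_*²) R₁(I_*¹)), where S_*ʲ = 1/R_j(I_*ʲ). -/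
theorem consecutive_equilibria_comparison
    (R1 R2 : ℝ → ℝ) (Rint Rnat q0 δ ρ I1 I2 Δ : ℝ)
    (hRint : 0 < Rint)
    (hdec1 : AntitoneOn R1 (Set.Icc (0 : ℝ) 1))
    (hdec2 : AntitoneOn R2 (Set.Icc (0 : ℝ) 1))
    (hrange1 : ∀ x ∈ Set.Icc (0 : ℝ) 1, R1 x ∈ Set.Icc Rint Rnat)
    (hrange2 : ∀ x ∈ Set.Icc (0 : ℝ) 1, R2 x ∈ Set.Icc Rint Rnat)
    (hδ : 0 ≤ δ)
    (hLip : ∀ x ∈ Set.Icc (0 : ℝ) 1, ∀ y ∈ Set.Icc (0 : ℝ) 1,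
      |R1 x - R2 y| ≤ q0 * (|x - y| + δ))
    (hρ0 : 0 < ρ) (hρ1 : ρ < 1)
    (hI1 : I1 ∈ Set.Ioo 0 ρ) (hI2 : I2 ∈ Set.Ioo 0 ρ)
    (heq1 : 1 / R1 I1 = 1 - I1 / ρ) (heq2 : 1 / R2 I2 = 1 - I2 / ρ)
    (hle : ∀ x ∈ Set.Icc (0 : ℝ) 1, R2 x ≤ R1 x)
    (hΔ : 0 ≤ Δ)
    (hclose : R1 I1 - q0 * Δ ≤ R2 I1) :
    0 ≤ I1 - I2 ∧
      I1 - I2 = ρ * (1 / R2 I2 - 1 / R1 I1) ∧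
      I1 - I2 ≤ ρ * q0 * Δ / (R2 I2 * R1 I1) := by
  obtain ⟨hI1a, hI1b⟩ := hI1
  obtain ⟨hI2a, hI2b⟩ := hI2
  have hI1m : I1 ∈ Set.Icc (0:ℝ) 1 := ⟨hI1a.le, (hI1b.trans hρ1).le⟩
  have hI2m : I2 ∈ Set.Icc (0:ℝ) 1 := ⟨hI2a.le, (hI2b.trans hρ1).le⟩
  have hR1pos : 0 < R1 I1 := lt_of_lt_of_le hRint (hrange1 I1 hI1m).1
  have hR2pos : 0 < R2 I2 := lt_of_lt_of_le hRint (hrange2 I2 hI2m).1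
  have h21 : I2 ≤ I1 := by
    by_contra h
    push_neg at h
    have h1 : R2 I2 ≤ R2 I1 := hdec2 hI1m hI2m h.le
    have h2 : R2 I1 ≤ R1 I1 := hle I1 hI1m
    have h3 : 1 / R1 I1 ≤ 1 / R2 I2 :=
      one_div_le_one_div_of_le hR2pos (h1.trans h2)
    rw [heq1, heq2] at h3
    have : I2 ≤ I1 := by
      have := sub_le_sub_left h3 1
      have hdiv : I2 / ρ ≤ I1 / ρ := by linarith
      exact (div_le_div_iff_of_pos_right hρ0).mp hdiv
    linarith
  have heqI : I1 - I2 = ρ * (1 / R2 I2 - 1 / R1 I1) := by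
    rw [heq1, heq2]
    field_simp
    ring
  refine ⟨by linarith, heqI, ?_⟩
  have h3 : R2 I1 ≤ R2 I2 := hdec2 hI2m hI1m h21
  have h4 : R1 I1 - R2 I2 ≤ q0 * Δ := by linarith
  have hrw : ρ * (1 / R2 I2 - 1 / R1 I1)
      = ρ * (R1 I1 - R2 I2) / (R2 I2 * R1 I1) := by
    field_simp
  rw [heqI, hrw]
  rw [mul_assoc]
  gcongr
end
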